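/- Let U be a submonoid of a monoid S and d ∈ S. Then d ∈ Dom_S(U) if and only if d ⊗ 1 = 1 ⊗ d in the tensor product S ⊗_U S of S with itself over U (Isbell's zigzag theorem, Stenström version). -/

import Mathlib

/-- The defining relation of the tensor product `S ⊗_U S`: `(a*u, b)` is identified
with `(a, u*b)` for `u ∈ U`. -/
def tensorRel {S : Type} [Monoid S] (U : Submonoid S) :
    S × S → S × S → Prop :=
  fun p q => ∃ (a b u : S), u ∈ U ∧ p = (a * u, b) ∧ q = (a, u * b)

namespace IsbellAux

variable {S : Type} [Monoid S] (U : Submonoid S)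

/-- The tensor product `S ⊗_U S` as a quotient. -/
abbrev Lam (U : Submonoid S) : Type := Quot (tensorRel U)

/-- Left action of `S` on the tensor product. -/
def lA (s : S) : Lam U → Lam U :=
  Quot.map (fun p => (s * p.1, p.2)) (by
    rintro _ _ ⟨a, b, u, hu, rfl, rfl⟩
    exact ⟨s * a, b, u, hu, by rw [mul_assoc], rfl⟩)

/-- Right action of `S` on the tensor product. -/
def rA (t : S) : Lam U → Lam U :=
  Quot.map (fun p => (p.1, p.2 * t)) (by
    rintro _ _ ⟨a, b, u, hu, rfl, rfl⟩
    exact ⟨a, b * t, u, hu, rfl, by show (a, u * b * t) = _; rw [mul_assoc]⟩)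

theorem lA_mk (s a b : S) : lA U s (Quot.mk _ (a, b)) = Quot.mk _ (s * a, b) := rfl

theorem rA_mk (t a b : S) : rA U t (Quot.mk _ (a, b)) = Quot.mk _ (a, b * t) := rfl

theorem lA_one (x : Lam U) : lA U 1 x = x := by
  induction x using Quot.ind with
  | _ p => rcases p with ⟨a, b⟩; simp [lA_mk]

theorem rA_one (x : Lam U) : rA U 1 x = x := by
  induction x using Quot.ind with
  | _ p => rcases p with ⟨a, b⟩; simp [rA_mk]

theorem lA_mul (s t : S) (x : Lam U) : lA U (s * t) x = lA U s (lA U t x) := by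
  induction x using Quot.ind with
  | _ p => rcases p with ⟨a, b⟩; simp [lA_mk, mul_assoc]

theorem rA_mul (s t : S) (x : Lam U) : rA U (s * t) x = rA U t (rA U s x) := by
  induction x using Quot.ind with
  | _ p => rcases p with ⟨a, b⟩; simp [rA_mk, mul_assoc]

theorem lA_rA (s t : S) (x : Lam U) : lA U s (rA U t x) = rA U t (lA U s x) := by
  induction x using Quot.ind with
  | _ p => rfl

/-- Left action on the free abelian group on the tensor product. -/
noncomputable def lG (s : S) : (Lam U →₀ ℤ) →+ (Lam U →₀ ℤ) :=
  Finsupp.mapDomain.addMonoidHom (lA U s)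

/-- Right action on the free abelian group on the tensor product. -/
noncomputable def rG (t : S) : (Lam U →₀ ℤ) →+ (Lam U →₀ ℤ) :=
  Finsupp.mapDomain.addMonoidHom (rA U t)

theorem lG_single (s : S) (x : Lam U) (n : ℤ) :
    lG U s (Finsupp.single x n) = Finsupp.single (lA U s x) n := by
  simp [lG, Finsupp.mapDomain.addMonoidHom_apply, Finsupp.mapDomain_single]

theorem rG_single (t : S) (x : Lam U) (n : ℤ) :
    rG U t (Finsupp.single x n) = Finsupp.single (rA U t x) n := by
  simp [rG, Finsupp.mapDomain.addMonoidHom_apply, Finsupp.mapDomain_single]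

theorem lG_one (v : Lam U →₀ ℤ) : lG U 1 v = v := by
  have h : lA U (1 : S) = id := funext (lA_one U)
  simp [lG, h, Finsupp.mapDomain.addMonoidHom_apply, Finsupp.mapDomain_id]

theorem rG_one (v : Lam U →₀ ℤ) : rG U 1 v = v := by
  have h : rA U (1 : S) = id := funext (rA_one U)
  simp [rG, h, Finsupp.mapDomain.addMonoidHom_apply, Finsupp.mapDomain_id]

theorem lG_mul (s t : S) (v : Lam U →₀ ℤ) : lG U (s * t) v = lG U s (lG U t v) := by
  have h : lA U (s * t) = lA U s ∘ lA U t := funext (lA_mul U s t)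
  simp [lG, h, Finsupp.mapDomain.addMonoidHom_apply, Finsupp.mapDomain_comp]

theorem rG_mul (s t : S) (v : Lam U →₀ ℤ) : rG U (s * t) v = rG U t (rG U s v) := by
  have h : rA U (s * t) = rA U t ∘ rA U s := funext (rA_mul U s t)
  simp [rG, h, Finsupp.mapDomain.addMonoidHom_apply, Finsupp.mapDomain_comp]

theorem lG_rG (s t : S) (v : Lam U →₀ ℤ) : lG U s (rG U t v) = rG U t (lG U s v) := by
  have h : lA U s ∘ rA U t = rA U t ∘ lA U s := funext (lA_rA U s t)
  simp only [lG, rG, Finsupp.mapDomain.addMonoidHom_apply, ← Finsupp.mapDomain_comp, h]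

/-- The "triangular matrix" monoid `S × ℤ[S ⊗_U S]`. -/
def Tri (U : Submonoid S) : Type := S × (Lam U →₀ ℤ)

noncomputable instance : Monoid (Tri U) where
  mul x y := (x.1 * y.1, rG U y.1 x.2 + lG U x.1 y.2)
  one := (1, 0)
  one_mul x := by
    refine Prod.ext (one_mul _) ?_
    show rG U x.1 0 + lG U 1 x.2 = x.2
    rw [map_zero, zero_add, lG_one]
  mul_one x := by
    refine Prod.ext (mul_one _) ?_
    show rG U 1 x.2 + lG U x.1 0 = x.2
    rw [map_zero, add_zero, rG_one]
  mul_assoc x y z := by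
    show ((_ : S), _) = ((_ : S), _)
    refine Prod.ext (mul_assoc _ _ _) ?_
    show rG U z.1 (rG U y.1 x.2 + lG U x.1 y.2) + lG U (x.1 * y.1) z.2 =
      rG U (y.1 * z.1) x.2 + lG U x.1 (rG U z.1 y.2 + lG U y.1 z.2)
    rw [map_add, map_add, rG_mul, lG_mul, lG_rG]
    abel

theorem tri_mul_def (x y : Tri U) :
    x * y = (x.1 * y.1, rG U y.1 x.2 + lG U x.1 y.2) := rfl

theorem tri_one_def : (1 : Tri U) = ((1 : S), 0) := rfl

/-- The first homomorphism: `s ↦ (s, 0)`. -/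
noncomputable def fh : S →* Tri U where
  toFun s := (s, 0)
  map_one' := rfl
  map_mul' s t := by
    refine Eq.trans ?_ (tri_mul_def U _ _).symm
    simp
    rfl

/-- The second homomorphism: `s ↦ (s, [s ⊗ 1] - [1 ⊗ s])`. -/
noncomputable def gh : S →* Tri U where
  toFun s := (s, Finsupp.single (Quot.mk (tensorRel U) (s, 1)) 1
      - Finsupp.single (Quot.mk (tensorRel U) (1, s)) 1)
  map_one' := by
    rw [tri_one_def]
    simp
    rfl
  map_mul' s t := by
    refine Eq.trans ?_ (tri_mul_def U _ _).symm
    refine Prod.ext rfl ?_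
    show Finsupp.single (Quot.mk (tensorRel U) (s * t, 1)) 1
        - Finsupp.single (Quot.mk (tensorRel U) (1, s * t)) 1
      = rG U t (Finsupp.single (Quot.mk (tensorRel U) (s, 1)) 1
          - Finsupp.single (Quot.mk (tensorRel U) (1, s)) 1)
        + lG U s (Finsupp.single (Quot.mk (tensorRel U) (t, 1)) 1
          - Finsupp.single (Quot.mk (tensorRel U) (1, t)) 1)
    rw [map_sub, map_sub, lG_single, lG_single, rG_single, rG_single,
      lA_mk, lA_mk, rA_mk, rA_mk]
    simp only [one_mul, mul_one]
    abel

theorem fh_eq_gh_on_U {u : S} (hu : u ∈ U) : fh U u = gh U u := by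
  have h : Quot.mk (tensorRel U) (u, (1 : S)) = Quot.mk (tensorRel U) ((1 : S), u) :=
    Quot.sound ⟨1, 1, u, hu, by simp, by simp⟩
  show ((u : S), (0 : Lam U →₀ ℤ)) = (u, _)
  rw [h]
  simp

end IsbellAux

/-- Isbell's zigzag theorem, Stenström version: for a submonoid `U` of a
monoid `S` and `d ∈ S`, `d` lies in the dominion of `U` in `S` if and only if
`d ⊗ 1 = 1 ⊗ d` in the tensor product `S ⊗_U S`, i.e. `(d, 1)` and `(1, d)` are
identified by the equivalence relation generated by the tensor relation. -/
theorem isbell_zigzag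
    {S : Type} [Monoid S] (U : Submonoid S) (d : S) :
    (∀ (T : Type) [Monoid T] (f g : S →* T),
        (∀ u ∈ U, f u = g u) → f d = g d) ↔
      Relation.EqvGen (tensorRel U) (d, 1) (1, d) := by
  constructor
  · intro h
    have hd := h (IsbellAux.Tri U) (IsbellAux.fh U) (IsbellAux.gh U)
      (fun u hu => IsbellAux.fh_eq_gh_on_U U hu)
    have h2 := congrArg Prod.snd hd
    show Relation.EqvGen (tensorRel U) (d, 1) (1, d)
    rw [← Quot.eq]
    have h3 : (0 : IsbellAux.Lam U →₀ ℤ)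
        = Finsupp.single (Quot.mk (tensorRel U) (d, 1)) 1
          - Finsupp.single (Quot.mk (tensorRel U) (1, d)) 1 := h2
    have h4 : Finsupp.single (Quot.mk (tensorRel U) (d, 1)) (1 : ℤ)
        = Finsupp.single (Quot.mk (tensorRel U) (1, d)) 1 := by
      have := sub_eq_zero.mp h3.symm
      exact this
    exact Finsupp.single_left_injective (one_ne_zero) h4
  · intro h T _ f g hfg
    have key : ∀ p q : S × S, Relation.EqvGen (tensorRel U) p q →
        f p.1 * g p.2 = f q.1 * g q.2 := by
      intro p q hpq
      induction hpq with
      | rel p q hr =>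
        obtain ⟨a, b, u, hu, rfl, rfl⟩ := hr
        show f (a * u) * g b = f a * g (u * b)
        rw [map_mul, map_mul, hfg u hu, mul_assoc]
      | refl p => rfl
      | symm _ _ _ ih => exact ih.symm
      | trans _ _ _ _ _ ih1 ih2 => exact ih1.trans ih2
    have := key (d, 1) (1, d) h
    simpa using this
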